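/- (Proposition 2.5(ii).) Let ρ > 0 and let ψ ∈ I_ρ. Then there exist a constant C₁ > 0 and t₀ > 0 such that ‖S(t)ψ‖_∞ ≥ C₁ t^{−ρ/(2−α)} for all t ≥ t₀. -/

import Mathlib

open MeasureTheory Real Set Metric Filter

noncomputable section

/-- `ℝ^N`. -/
abbrev EucN (N : ℕ) := EuclideanSpace ℝ (Fin N)

/-- `C_b(ℝ^N)`, the bounded continuous functions with the sup norm. -/
abbrev CbN (N : ℕ) := BoundedContinuousFunction (EucN N) ℝ

/-- Proposition 2.5(ii): for `ψ ∈ I_ρ` one has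
`‖S(t)ψ‖_∞ ≥ C₁ t^{-ρ/(2-α)}` for `t` large. -/
theorem semigroup_lower_decay_Irho
    (N : ℕ) (hN : 1 ≤ N) (α : ℝ) (hα0 : 0 ≤ α) (hα1 : α < 1)
    (Γ : EucN N → EucN N → ℝ → ℝ)
    (hΓmeas : Measurable fun p : EucN N × EucN N × ℝ => Γ p.1 p.2.1 p.2.2)
    (c₀ : ℝ) (hc₀ : 0 < c₀)
    (hK1y : ∀ (x : EucN N) (t : ℝ), 0 < t → ∫ y, Γ x y t = 1)
    (hK1x : ∀ (y : EucN N) (t : ℝ), 0 < t → ∫ x, Γ x y t = 1)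
    (hK2 : ∀ (x y : EucN N) (s t : ℝ), 0 < s → s < t →
      Γ x y t = ∫ ξ, Γ x ξ (t - s) * Γ ξ y s)
    (hK5 : ∀ (x y : EucN N) (t : ℝ), 0 < t →
      0 < Γ x y t ∧ Γ x y t ≤ c₀ * t ^ (-(N : ℝ) / (2 - α)))
    (S : ℝ → CbN N → CbN N)
    (hS0 : ∀ φ, S 0 φ = φ)
    (hSΓ : ∀ (φ : CbN N) (t : ℝ), 0 < t → ∀ x, S t φ x = ∫ y, Γ x y t * φ y)
    (hK4 : ∀ φ : CbN N, ContinuousOn (fun t => S t φ) (Ici (0 : ℝ)))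
    -- kernel lower bound (Lemma 2.3):
    (CαN : ℝ) (hCαN : 0 < CαN)
    (hLower : ∀ φ : CbN N, (∀ x, 0 ≤ φ x) → ∀ t > (0 : ℝ), ∀ x : EucN N,
      ‖x‖ ≤ t ^ ((1 : ℝ) / (2 - α)) →
      CαN⁻¹ * t ^ (-(N : ℝ) / (2 - α)) *
        (∫ y in closedBall (0 : EucN N) (t ^ ((1 : ℝ) / (2 - α))), φ y)
        ≤ S t φ x)
    (ρ : ℝ) (hρ : 0 < ρ)
    -- `ψ ∈ I_ρ`: nonnegative with `liminf_{|x|→∞} |x|^ρ ψ(x) > 0`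
    (ψ : CbN N) (hψnn : ∀ x, 0 ≤ ψ x)
    (hψlower : ∃ c > (0 : ℝ), ∃ R : ℝ, ∀ x : EucN N, R ≤ ‖x‖ →
      c ≤ ‖x‖ ^ ρ * ψ x) :
    ∃ C₁ > (0 : ℝ), ∃ t₀ > (0 : ℝ), ∀ t ≥ t₀,
      C₁ * t ^ (-ρ / (2 - α)) ≤ ‖S t ψ‖ := by
  obtain ⟨c, hc, R, hR⟩ := hψlower
  have h2α : 0 < 2 - α := by linarith
  set R' : ℝ := max R 1 with hR'def
  have hR'1 : (1 : ℝ) ≤ R' := le_max_right _ _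
  have hR'R : R ≤ R' := le_max_left _ _
  have hR'pos : (0 : ℝ) < R' := lt_of_lt_of_le one_pos hR'1
  -- the volume of the unit ball
  set v : ℝ := (volume (ball (0 : EucN N) 1)).toReal with hv
  have hvpos : 0 < v := by
    apply ENNReal.toReal_pos
    · exact (measure_ball_pos volume 0 one_pos).ne'
    · exact measure_ball_lt_top.ne
  refine ⟨CαN⁻¹ * v * c / 2, by positivity, (2 * R') ^ (2 - α),
    rpow_pos_of_pos (by linarith) _, ?_⟩
  intro t ht
  have ht0 : 0 < t := lt_of_lt_of_le (rpow_pos_of_pos (by linarith) _) ht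
  set r : ℝ := t ^ ((1 : ℝ) / (2 - α)) with hrdef
  have hrpos : 0 < r := rpow_pos_of_pos ht0 _
  have h2R'r : 2 * R' ≤ r := by
    have h1 : ((2 * R') ^ (2 - α)) ^ ((1 : ℝ) / (2 - α)) = 2 * R' := by
      rw [← Real.rpow_mul (by linarith : (0:ℝ) ≤ 2 * R'),
        mul_one_div_cancel h2α.ne', Real.rpow_one]
    calc 2 * R' = ((2 * R') ^ (2 - α)) ^ ((1 : ℝ) / (2 - α)) := h1.symm
      _ ≤ r := Real.rpow_le_rpow (by positivity) ht (by positivity)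
  have hR'r : R' ≤ r := by nlinarith
  -- the annulus
  set A : Set (EucN N) := closedBall (0 : EucN N) r \ closedBall (0 : EucN N) R' with hA
  -- volume of closed balls
  have hball : ∀ s : ℝ, 0 ≤ s →
      (volume (closedBall (0 : EucN N) s)).toReal = s ^ N * v := by
    intro s hs
    rw [Measure.addHaar_closedBall volume 0 hs, finrank_euclideanSpace_fin,
      ENNReal.toReal_mul, ENNReal.toReal_ofReal (by positivity)]
  have hAvol : (volume A).toReal = (r ^ N - R' ^ N) * v := by
    rw [hA, measure_diff (closedBall_subset_closedBall hR'r)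
      measurableSet_closedBall.nullMeasurableSet measure_closedBall_lt_top.ne,
      ENNReal.toReal_sub_of_le (measure_mono (closedBall_subset_closedBall hR'r))
        measure_closedBall_lt_top.ne,
      hball r hrpos.le, hball R' hR'pos.le]
    ring
  -- lower bound the annulus volume
  have hannulus : r ^ N / 2 * v ≤ (volume A).toReal := by
    rw [hAvol]
    have h2N : (2 : ℝ) ≤ 2 ^ N := by
      calc (2 : ℝ) = 2 ^ 1 := (pow_one 2).symm
        _ ≤ 2 ^ N := pow_le_pow_right₀ one_le_two hN
    have hRN : R' ^ N ≤ r ^ N / 2 := by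
      have h1 : R' ^ N ≤ (r / 2) ^ N :=
        pow_le_pow_left₀ hR'pos.le (by linarith) N
      have h2 : (r / 2) ^ N = r ^ N / 2 ^ N := div_pow r 2 N
      have h3 : r ^ N / 2 ^ N ≤ r ^ N / 2 :=
        div_le_div_of_nonneg_left (by positivity) two_pos h2N
      linarith
    nlinarith
  -- ψ ≥ c / r^ρ on the annulus
  have hψA : ∀ x ∈ A, c / r ^ ρ ≤ ψ x := by
    intro x hx
    obtain ⟨hx1, hx2⟩ := hx
    rw [mem_closedBall, dist_zero_right] at hx1
    rw [mem_closedBall, dist_zero_right, not_le] at hx2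
    have hxR : R ≤ ‖x‖ := le_trans hR'R hx2.le
    have hxpos : 0 < ‖x‖ := lt_of_lt_of_le hR'pos hx2.le
    have h1 : c ≤ ‖x‖ ^ ρ * ψ x := hR x hxR
    have h2 : ‖x‖ ^ ρ ≤ r ^ ρ := Real.rpow_le_rpow hxpos.le hx1 hρ.le
    have h3 : 0 < ‖x‖ ^ ρ := rpow_pos_of_pos hxpos _
    have h4 : 0 < r ^ ρ := rpow_pos_of_pos hrpos _
    rw [div_le_iff₀ h4]
    calc c ≤ ‖x‖ ^ ρ * ψ x := h1
      _ ≤ r ^ ρ * ψ x := by nlinarith [hψnn x]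
      _ = ψ x * r ^ ρ := mul_comm _ _
  -- integral lower bound
  have hint : IntegrableOn (fun y => ψ y) (closedBall (0 : EucN N) r) volume :=
    ψ.continuous.continuousOn.integrableOn_compact (isCompact_closedBall _ _)
  have hintA : IntegrableOn (fun y => ψ y) A volume :=
    hint.mono_set diff_subset
  have hstep1 : (volume A).toReal * (c / r ^ ρ) ≤ ∫ y in A, ψ y := by
    have := setIntegral_mono_on (f := fun _ : EucN N => c / r ^ ρ)
      (g := fun y => ψ y) (μ := volume) (s := A)
      (integrableOn_const
        (lt_of_le_of_lt (measure_mono diff_subset) measure_closedBall_lt_top).ne)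
      hintA (measurableSet_closedBall.diff measurableSet_closedBall) hψA
    rwa [setIntegral_const, smul_eq_mul] at this
  have hstep2 : (∫ y in A, ψ y) ≤ ∫ y in closedBall (0 : EucN N) r, ψ y := by
    apply setIntegral_mono_set hint
    · exact Filter.Eventually.of_forall fun y => hψnn y
    · exact HasSubset.Subset.eventuallyLE diff_subset
  have hrρ : 0 < r ^ ρ := rpow_pos_of_pos hrpos _
  have hintlow : r ^ N / 2 * v * (c / r ^ ρ) ≤ ∫ y in closedBall (0 : EucN N) r, ψ y := by
    have h1 : r ^ N / 2 * v * (c / r ^ ρ) ≤ (volume A).toReal * (c / r ^ ρ) := by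
      apply mul_le_mul_of_nonneg_right hannulus (by positivity)
    linarith
  -- kernel lower bound at x = 0
  have hker := hLower ψ hψnn t ht0 0 (by rw [norm_zero]; exact hrpos.le)
  have hmain : CαN⁻¹ * t ^ (-(N : ℝ) / (2 - α)) * (r ^ N / 2 * v * (c / r ^ ρ))
      ≤ S t ψ 0 := by
    calc CαN⁻¹ * t ^ (-(N : ℝ) / (2 - α)) * (r ^ N / 2 * v * (c / r ^ ρ))
        ≤ CαN⁻¹ * t ^ (-(N : ℝ) / (2 - α)) *
          (∫ y in closedBall (0 : EucN N) r, ψ y) := by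
          apply mul_le_mul_of_nonneg_left hintlow (by positivity)
      _ ≤ S t ψ 0 := hker
  -- rewrite powers of r in terms of powers of t
  have hrN : r ^ N = t ^ ((N : ℝ) / (2 - α)) := by
    rw [hrdef, ← Real.rpow_natCast (t ^ ((1 : ℝ) / (2 - α))) N,
      ← Real.rpow_mul ht0.le]
    congr 1
    field_simp
  have hrρ' : r ^ ρ = t ^ (ρ / (2 - α)) := by
    rw [hrdef, ← Real.rpow_mul ht0.le]
    congr 1
    field_simp
  have hcancel : t ^ (-(N : ℝ) / (2 - α)) * t ^ ((N : ℝ) / (2 - α)) = 1 := by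
    have hz : -(N : ℝ) / (2 - α) + (N : ℝ) / (2 - α) = 0 := by ring
    rw [← Real.rpow_add ht0, hz, Real.rpow_zero]
  have hneg : t ^ (-ρ / (2 - α)) = (t ^ (ρ / (2 - α)))⁻¹ := by
    rw [neg_div, Real.rpow_neg ht0.le]
  have htρ : 0 < t ^ (ρ / (2 - α)) := rpow_pos_of_pos ht0 _
  have heq : CαN⁻¹ * t ^ (-(N : ℝ) / (2 - α)) * (r ^ N / 2 * v * (c / r ^ ρ))
      = CαN⁻¹ * v * c / 2 * t ^ (-ρ / (2 - α)) := by
    rw [hrN, hrρ', hneg]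
    linear_combination (CαN⁻¹ * v * c / 2 * (t ^ (ρ / (2 - α)))⁻¹) * hcancel
  rw [← heq]
  calc CαN⁻¹ * t ^ (-(N : ℝ) / (2 - α)) * (r ^ N / 2 * v * (c / r ^ ρ))
      ≤ S t ψ 0 := hmain
    _ ≤ ‖S t ψ 0‖ := le_abs_self _
    _ ≤ ‖S t ψ‖ := (S t ψ).norm_coe_le_norm 0
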